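/- Supermartingale convergence theorem: let (Ω,F,(F_k)_{k∈ℕ₀},μ) be a filtered probability space and let (Y_k), (Z_k), (W_k) be sequences of nonnegative integrable real-valued random variables on Ω such that Y_k, Z_k, W_k are F_k-measurable for each k ∈ ℕ₀, E(Y_{k+1} | F_k) ≤ Y_k − Z_k + W_k almost surely for each k ∈ ℕ₀, and Σ_k W_k < ∞ almost surely. Then (Y_k) converges almost surely to a finite nonnegative random variable, and Σ_k Z_k < ∞ almost surely. -/

import Mathlib

open Filter Topology MeasureTheory

/-- Pointwise invariant: the transform of `m` by the indicator of "partial sums of `w`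
still below `a`" equals `m n - m 0` for a suitable stopped index `n`. -/
lemma RS_invariant (a : ℝ) (ha : 0 ≤ a) (w m ξ : ℕ → ℝ) (hw : ∀ i, 0 ≤ w i)
    (hξ1 : ∀ j, (∑ i ∈ Finset.range (j + 1), w i) ≤ a → ξ j = 1)
    (hξ0 : ∀ j, a < (∑ i ∈ Finset.range (j + 1), w i) → ξ j = 0) :
    ∀ k : ℕ, ∃ n, n ≤ k ∧
      (∑ j ∈ Finset.range k, ξ j * (m (j + 1) - m j)) = m n - m 0 ∧
      (∑ j ∈ Finset.range n, w j) ≤ a ∧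
      (n < k → a < ∑ i ∈ Finset.range (n + 1), w i) := by
  intro k
  induction k with
  | zero => exact ⟨0, le_rfl, by simp, by simpa using ha, by omega⟩
  | succ k ih =>
    obtain ⟨n, hnk, hS, hsum, hlt⟩ := ih
    by_cases h : (∑ i ∈ Finset.range (k + 1), w i) ≤ a
    · have hnk' : n = k := by
        by_contra hne
        have h1 : n < k := lt_of_le_of_ne hnk hne
        have h2 := hlt h1
        have hmono : (∑ i ∈ Finset.range (n + 1), w i) ≤ ∑ i ∈ Finset.range (k + 1), w i :=
          Finset.sum_le_sum_of_subset_of_nonneg (Finset.range_subset_range.2 (by omega))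
            (fun i _ _ => hw i)
        linarith
      subst hnk'
      refine ⟨n + 1, le_rfl, ?_, by simpa using h, by omega⟩
      rw [Finset.sum_range_succ, hS, hξ1 n h]
      ring
    · push_neg at h
      refine ⟨n, by omega, ?_, hsum, fun _ => ?_⟩
      · rw [Finset.sum_range_succ, hS, hξ0 k h]
        ring
      · rcases lt_or_eq_of_le hnk with h' | h'
        · exact hlt h'
        · rw [h']; exact h

/-- Supermartingale convergence theorem (Robbins–Siegmund type): an almost
supermartingale with summable perturbations converges a.s. and the compensator
series converges a.s. -/
theorem supermartingale_convergence
    {Ω : Type*} {m0 : MeasurableSpace Ω} {μ : Measure Ω} [IsProbabilityMeasure μ]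
    (ℱ : Filtration ℕ m0)
    (Y Z W : ℕ → Ω → ℝ)
    (hY_nonneg : ∀ k ω, 0 ≤ Y k ω)
    (hZ_nonneg : ∀ k ω, 0 ≤ Z k ω)
    (hW_nonneg : ∀ k ω, 0 ≤ W k ω)
    (hY_int : ∀ k, Integrable (Y k) μ)
    (hZ_int : ∀ k, Integrable (Z k) μ)
    (hW_int : ∀ k, Integrable (W k) μ)
    (hY_meas : ∀ k, StronglyMeasurable[ℱ k] (Y k))
    (hZ_meas : ∀ k, StronglyMeasurable[ℱ k] (Z k))
    (hW_meas : ∀ k, StronglyMeasurable[ℱ k] (W k))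
    (hsuper : ∀ k, μ[Y (k + 1) | ℱ k] ≤ᵐ[μ] fun ω => Y k ω - Z k ω + W k ω)
    (hW_sum : ∀ᵐ ω ∂μ, Summable fun k => W k ω) :
    ∀ᵐ ω ∂μ,
      (∃ l : ℝ, 0 ≤ l ∧ Tendsto (fun k => Y k ω) atTop (𝓝 l)) ∧
        Summable fun k => Z k ω := by
  classical
  set M : ℕ → Ω → ℝ :=
    fun k ω => Y k ω + ∑ j ∈ Finset.range k, Z j ω - ∑ j ∈ Finset.range k, W j ω with hMdef
  have hM_meas : ∀ k, StronglyMeasurable[ℱ k] (M k) := by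
    intro k
    apply StronglyMeasurable.sub
    · exact (hY_meas k).add (Finset.stronglyMeasurable_fun_sum _ fun j hj =>
        (hZ_meas j).mono (ℱ.mono (Finset.mem_range.1 hj).le))
    · exact Finset.stronglyMeasurable_fun_sum _ fun j hj =>
        (hW_meas j).mono (ℱ.mono (Finset.mem_range.1 hj).le)
  have hM_int : ∀ k, Integrable (M k) μ := fun k =>
    ((hY_int k).add (integrable_finset_sum _ fun j _ => hZ_int j)).sub
      (integrable_finset_sum _ fun j _ => hW_int j)
  -- M is a supermartingale
  have hM_super : Supermartingale M ℱ μ := by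
    refine supermartingale_nat (fun k => hM_meas k) hM_int (fun k => ?_)
    set C : Ω → ℝ :=
      fun ω => ∑ j ∈ Finset.range (k + 1), Z j ω - ∑ j ∈ Finset.range (k + 1), W j ω with hCdef
    have hC_meas : StronglyMeasurable[ℱ k] C := by
      apply StronglyMeasurable.sub
      · exact Finset.stronglyMeasurable_fun_sum _ fun j hj =>
          (hZ_meas j).mono (ℱ.mono (Nat.lt_succ_iff.1 (Finset.mem_range.1 hj)))
      · exact Finset.stronglyMeasurable_fun_sum _ fun j hj =>
          (hW_meas j).mono (ℱ.mono (Nat.lt_succ_iff.1 (Finset.mem_range.1 hj)))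
    have hC_int : Integrable C μ :=
      (integrable_finset_sum _ fun j _ => hZ_int j).sub
        (integrable_finset_sum _ fun j _ => hW_int j)
    have hM_eq : M (k + 1) = Y (k + 1) + C := by
      funext ω; simp only [hMdef, hCdef, Pi.add_apply]; ring
    have h1 : μ[M (k + 1) | ℱ k] =ᵐ[μ] μ[Y (k + 1) | ℱ k] + C := by
      rw [hM_eq]
      refine (condExp_add (hY_int _) hC_int _).trans ?_
      rw [condExp_of_stronglyMeasurable (ℱ.le k) hC_meas hC_int]
    filter_upwards [h1, hsuper k] with ω h1ω h2ω
    rw [h1ω]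
    simp only [Pi.add_apply, hMdef, hCdef]
    rw [Finset.sum_range_succ (f := fun j => Z j ω), Finset.sum_range_succ (f := fun j => W j ω)]
    linarith [h2ω]
  -- indicator process
  set ξ : ℕ → ℕ → Ω → ℝ :=
    fun a j ω => if (∑ i ∈ Finset.range (j + 1), W i ω) ≤ (a : ℝ) then 1 else 0 with hξdef
  have hξ_meas : ∀ (a j : ℕ), StronglyMeasurable[ℱ j] (ξ a j) := by
    intro a j
    have hsum : StronglyMeasurable[ℱ j] (fun ω => ∑ i ∈ Finset.range (j + 1), W i ω) :=
      Finset.stronglyMeasurable_fun_sum _ fun i hi =>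
        (hW_meas i).mono (ℱ.mono (Nat.lt_succ_iff.1 (Finset.mem_range.1 hi)))
    have hset : MeasurableSet[ℱ j] {ω | (∑ i ∈ Finset.range (j + 1), W i ω) ≤ (a : ℝ)} :=
      measurableSet_le hsum.measurable measurable_const
    have hrw : ξ a j = Set.indicator {ω | (∑ i ∈ Finset.range (j + 1), W i ω) ≤ (a : ℝ)}
        (fun _ => (1 : ℝ)) := by
      funext ω
      simp only [hξdef, Set.indicator_apply, Set.mem_setOf_eq]
    rw [hrw]
    exact stronglyMeasurable_const.indicator hset
  -- the transformed submartingale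
  set G : ℕ → ℕ → Ω → ℝ :=
    fun a n => ∑ j ∈ Finset.range n, ξ a j * ((-M) (j + 1) - (-M) j) with hGdef
  have hG_sub : ∀ a : ℕ, Submartingale (G a) ℱ μ := fun a =>
    hM_super.neg.sum_mul_sub (R := 1) (hξ_meas a)
      (fun n ω => by simp only [hξdef]; split <;> norm_num)
      (fun n ω => by simp only [hξdef]; split <;> norm_num)
  have hG_apply : ∀ (a n : ℕ) (ω : Ω),
      G a n ω = -(∑ j ∈ Finset.range n, ξ a j ω * (M (j + 1) ω - M j ω)) := by
    intro a n ω
    simp only [hGdef, Finset.sum_apply, Pi.mul_apply, Pi.sub_apply, Pi.neg_apply,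
      ← Finset.sum_neg_distrib]
    exact Finset.sum_congr rfl fun j _ => by ring
  -- pointwise upper bound on G
  have hG_le : ∀ (a : ℕ) (ω : Ω) (n : ℕ), G a n ω ≤ (a : ℝ) + Y 0 ω := by
    intro a ω n
    obtain ⟨n', -, hS, hsum, -⟩ := RS_invariant (a : ℝ) (Nat.cast_nonneg a)
      (fun i => W i ω) (fun k => M k ω) (fun j => ξ a j ω) (fun i => hW_nonneg i ω)
      (fun j hj => by simp only [hξdef]; rw [if_pos hj])
      (fun j hj => by simp only [hξdef]; rw [if_neg (not_le.2 hj)]) n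
    rw [hG_apply, hS]
    have hM0 : M 0 ω = Y 0 ω := by simp [hMdef]
    have hMlower : -(a : ℝ) ≤ M n' ω := by
      have h1 : 0 ≤ Y n' ω + ∑ j ∈ Finset.range n', Z j ω :=
        add_nonneg (hY_nonneg _ _) (Finset.sum_nonneg fun j _ => hZ_nonneg j ω)
      simp only [hMdef]
      linarith
    linarith
  -- L¹ bound and a.s. convergence of each G a
  have key : ∀ a : ℕ, ∀ᵐ ω ∂μ, ∃ c, Tendsto (fun n => G a n ω) atTop (𝓝 c) := by
    intro a
    set C : ℝ := 2 * (a : ℝ) + 2 * ∫ ω, Y 0 ω ∂μ with hCdef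
    refine (hG_sub a).exists_ae_tendsto_of_bdd (R := C.toNNReal) (fun n => ?_)
    have hGint : Integrable (G a n) μ := (hG_sub a).integrable n
    have hInt0 : (0 : ℝ) ≤ ∫ ω, G a n ω ∂μ := by
      have h0 : ∫ ω, G a 0 ω ∂μ = 0 := by
        simp [hGdef]
      have hle : ∫ ω in Set.univ, G a 0 ω ∂μ ≤ ∫ ω in Set.univ, G a n ω ∂μ :=
        (hG_sub a).setIntegral_le (Nat.zero_le n) MeasurableSet.univ
      rw [setIntegral_univ, setIntegral_univ] at hle
      rw [← h0]
      exact hle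
    have hbound : ∫ ω, ‖G a n ω‖ ∂μ ≤ C := by
      have hf1 : Integrable (fun ω => (a : ℝ) + Y 0 ω) μ := (integrable_const _).add (hY_int 0)
      have hf2 : Integrable (fun ω => 2 * ((a : ℝ) + Y 0 ω)) μ := hf1.const_mul 2
      have hmaj : Integrable (fun ω => 2 * ((a : ℝ) + Y 0 ω) - G a n ω) μ := hf2.sub hGint
      have hptw : ∀ ω, ‖G a n ω‖ ≤ 2 * ((a : ℝ) + Y 0 ω) - G a n ω := by
        intro ω
        have h1 := hG_le a ω n
        have h2 : 0 ≤ (a : ℝ) + Y 0 ω := add_nonneg (Nat.cast_nonneg a) (hY_nonneg 0 ω)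
        rcases abs_cases (G a n ω) with ⟨h3, -⟩ | ⟨h3, -⟩ <;>
          · rw [Real.norm_eq_abs, h3]; linarith
      calc ∫ ω, ‖G a n ω‖ ∂μ ≤ ∫ ω, (2 * ((a : ℝ) + Y 0 ω) - G a n ω) ∂μ :=
            integral_mono hGint.norm hmaj hptw
        _ = 2 * ((a : ℝ) + ∫ ω, Y 0 ω ∂μ) - ∫ ω, G a n ω ∂μ := by
            rw [integral_sub hf2 hGint, MeasureTheory.integral_const_mul 2,
              integral_add (integrable_const _) (hY_int 0), integral_const]
            simp
        _ ≤ C := by rw [hCdef]; linarith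
    have heq : eLpNorm (G a n) 1 μ = ENNReal.ofReal (∫ ω, ‖G a n ω‖ ∂μ) := by
      rw [eLpNorm_one_eq_lintegral_enorm, ← ofReal_integral_norm_eq_lintegral_enorm hGint]
    rw [heq]
    calc ENNReal.ofReal (∫ ω, ‖G a n ω‖ ∂μ) ≤ ENNReal.ofReal C :=
          ENNReal.ofReal_le_ofReal hbound
      _ = (C.toNNReal : ENNReal) := rfl
  -- combine
  filter_upwards [ae_all_iff.2 key, hW_sum] with ω hconv hsum
  set a : ℕ := ⌈∑' k, W k ω⌉₊ with hadef
  have ha : ∀ j : ℕ, (∑ i ∈ Finset.range (j + 1), W i ω) ≤ (a : ℝ) := fun j =>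
    (Summable.sum_le_tsum (Finset.range (j + 1)) (fun i _ => hW_nonneg i ω) hsum).trans (Nat.le_ceil _)
  have hGall : ∀ n, G a n ω = M 0 ω - M n ω := by
    intro n
    rw [hG_apply]
    have hone : ∀ j ∈ Finset.range n, ξ a j ω * (M (j + 1) ω - M j ω)
        = M (j + 1) ω - M j ω := by
      intro j _
      simp only [hξdef]
      rw [if_pos (ha j), one_mul]
    rw [Finset.sum_congr rfl hone, Finset.sum_range_sub (f := fun j => M j ω)]
    ring
  obtain ⟨c, hc⟩ := hconv a
  have hMten : Tendsto (fun n => M n ω) atTop (𝓝 (M 0 ω - c)) := by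
    have hrw : (fun n => M n ω) = fun n => M 0 ω - G a n ω := by
      funext n; rw [hGall n]; ring
    rw [hrw]
    exact tendsto_const_nhds.sub hc
  have hWten : Tendsto (fun n => ∑ j ∈ Finset.range n, W j ω) atTop (𝓝 (∑' j, W j ω)) :=
    hsum.hasSum.tendsto_sum_nat
  have hYZten : Tendsto (fun n => Y n ω + ∑ j ∈ Finset.range n, Z j ω) atTop
      (𝓝 (M 0 ω - c + ∑' j, W j ω)) := by
    have hrw : (fun n => Y n ω + ∑ j ∈ Finset.range n, Z j ω)
        = fun n => M n ω + ∑ j ∈ Finset.range n, W j ω := by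
      funext n; simp only [hMdef]; ring
    rw [hrw]
    exact hMten.add hWten
  obtain ⟨B, hB⟩ := hYZten.bddAbove_range
  have hZsum : Summable fun k => Z k ω := by
    refine summable_of_sum_range_le (c := B) (fun k => hZ_nonneg k ω) (fun n => ?_)
    have h1 : Y n ω + ∑ j ∈ Finset.range n, Z j ω ≤ B := hB ⟨n, rfl⟩
    linarith [hY_nonneg n ω]
  have hZten : Tendsto (fun n => ∑ j ∈ Finset.range n, Z j ω) atTop (𝓝 (∑' j, Z j ω)) :=
    hZsum.hasSum.tendsto_sum_nat
  have hYten : Tendsto (fun n => Y n ω) atTop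
      (𝓝 (M 0 ω - c + ∑' j, W j ω - ∑' j, Z j ω)) := by
    have hrw : (fun n => Y n ω)
        = fun n => (Y n ω + ∑ j ∈ Finset.range n, Z j ω) - ∑ j ∈ Finset.range n, Z j ω := by
      funext n; ring
    rw [hrw]
    exact hYZten.sub hZten
  exact ⟨⟨_, ge_of_tendsto' hYten (fun n => hY_nonneg n ω), hYten⟩, hZsum⟩
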